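/- Let J: ℝ^N × ℝ^N → ℝ be convex and differentiable, and let P̄⋆ ≥ p̄₀ and P̲⋆ ≥ p̲₀ componentwise. Suppose λ̄ = ∇_{P̄}J(P̄⋆,P̲⋆) + A₊ᵀμ̄ + A₋ᵀμ̲ + ω̄ and λ̲ = ∇_{P̲}J(P̄⋆,P̲⋆) + A₋ᵀμ̄ + A₊ᵀμ̲ + ω̲, where A₊, A₋ are entrywise nonnegative matrices and μ̄, μ̲, ω̄, ω̲ ≥ 0. Then λ̄ᵀ(P̄⋆ − p̄₀) + λ̲ᵀ(P̲⋆ − p̲₀) ≥ J(P̄⋆, P̲⋆) − J(p̄₀, p̲₀). -/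

import Mathlib

open Finset

/-- First-order condition for a convex differentiable function on `Set.univ`. -/
lemma convex_fderiv_le {E : Type*} [NormedAddCommGroup E] [NormedSpace ℝ E]
    (J : E → ℝ) (hc : ConvexOn ℝ Set.univ J) (x y : E)
    (hd : DifferentiableAt ℝ J x) :
    fderiv ℝ J x (y - x) ≤ J y - J x := by
  set φ : ℝ → ℝ := fun t => J (x + t • (y - x)) with hφ
  have hline : ∀ t : ℝ, (AffineMap.lineMap x y : ℝ →ᵃ[ℝ] E) t = x + t • (y - x) := by
    intro t
    simp [AffineMap.lineMap_apply]
    abel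
  have hconv : ConvexOn ℝ Set.univ φ := by
    have := hc.comp_affineMap (AffineMap.lineMap x y : ℝ →ᵃ[ℝ] E)
    have heq : (J ∘ (AffineMap.lineMap x y : ℝ →ᵃ[ℝ] E)) = φ := by
      funext t; simp [hline t, φ]
    rw [heq] at this
    simpa using this
  have hderiv : HasDerivAt φ (fderiv ℝ J x (y - x)) 0 := by
    have h1 : HasDerivAt (fun t : ℝ => x + t • (y - x)) (y - x) 0 := by
      simpa using ((hasDerivAt_id (0:ℝ)).smul_const (y - x)).const_add x
    have h2 : HasFDerivAt J (fderiv ℝ J x) (x + (0:ℝ) • (y - x)) := by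
      simpa using hd.hasFDerivAt
    exact h2.comp_hasDerivAt 0 h1
  have hs := hconv.le_slope_of_hasDerivAt (Set.mem_univ (0:ℝ)) (Set.mem_univ (1:ℝ))
    one_pos hderiv
  have hφ0 : φ 0 = J x := by simp [φ]
  have hφ1 : φ 1 = J y := by simp [φ]
  simpa [slope, hφ0, hφ1] using hs

theorem dso_surplus_nonneg {N M : ℕ}
    (J : (Fin N → ℝ) × (Fin N → ℝ) → ℝ)
    (hJconv : ConvexOn ℝ Set.univ J)
    (hJdiff : Differentiable ℝ J)
    (Pbar Pund pbar0 pund0 : Fin N → ℝ)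
    (hPbar : ∀ j, pbar0 j ≤ Pbar j) (hPund : ∀ j, pund0 j ≤ Pund j)
    (Aplus Aminus : Matrix (Fin M) (Fin N) ℝ)
    (hAp : ∀ i j, 0 ≤ Aplus i j) (hAm : ∀ i j, 0 ≤ Aminus i j)
    (mubar muund : Fin M → ℝ) (hmb : ∀ i, 0 ≤ mubar i) (hmu : ∀ i, 0 ≤ muund i)
    (ombar omund : Fin N → ℝ) (hob : ∀ j, 0 ≤ ombar j) (hou : ∀ j, 0 ≤ omund j)
    (lbar lund : Fin N → ℝ)
    (hlbar : ∀ j, lbar j =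
      fderiv ℝ J (Pbar, Pund) (Pi.single j 1, 0) +
        (∑ i, Aplus i j * mubar i) + (∑ i, Aminus i j * muund i) + ombar j)
    (hlund : ∀ j, lund j =
      fderiv ℝ J (Pbar, Pund) (0, Pi.single j 1) +
        (∑ i, Aminus i j * mubar i) + (∑ i, Aplus i j * muund i) + omund j) :
    J (Pbar, Pund) - J (pbar0, pund0) ≤
      (∑ j, lbar j * (Pbar j - pbar0 j)) + ∑ j, lund j * (Pund j - pund0 j) := by
  set D := fderiv ℝ J (Pbar, Pund) with hD
  -- first-order convexity bound
  have hfo := convex_fderiv_le J hJconv (Pbar, Pund) (pbar0, pund0)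
    (hJdiff (Pbar, Pund))
  have hfo' : J (Pbar, Pund) - J (pbar0, pund0) ≤
      D ((Pbar, Pund) - (pbar0, pund0)) := by
    have := hfo
    have hneg : D ((pbar0, pund0) - (Pbar, Pund)) =
        - D ((Pbar, Pund) - (pbar0, pund0)) := by
      rw [← map_neg]; congr 1; abel
    rw [hneg] at this
    linarith
  -- decompose the direction into the standard basis
  have hdecomp : ((Pbar, Pund) - (pbar0, pund0) :
      (Fin N → ℝ) × (Fin N → ℝ)) =
      (∑ j, (Pbar j - pbar0 j) • ((Pi.single j 1 : Fin N → ℝ), (0 : Fin N → ℝ)))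
      + ∑ j, (Pund j - pund0 j) • ((0 : Fin N → ℝ), (Pi.single j 1 : Fin N → ℝ)) := by
    rw [Prod.ext_iff]
    constructor <;>
    · simp only [Prod.fst_sum, Prod.snd_sum, Prod.smul_mk, smul_zero, Prod.mk_sub_mk,
        Prod.fst_add, Prod.snd_add]
      funext i
      simp [Finset.sum_apply, Pi.single_apply, Finset.sum_ite_eq', mul_comm]
  have hDval : D ((Pbar, Pund) - (pbar0, pund0)) =
      (∑ j, (Pbar j - pbar0 j) * D (Pi.single j 1, 0))
      + ∑ j, (Pund j - pund0 j) * D (0, Pi.single j 1) := by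
    rw [hdecomp, map_add, map_sum, map_sum]
    have e1 : ∀ (c : ℝ) (v : Fin N → ℝ), ((c • v, (0 : Fin N → ℝ)) :
        (Fin N → ℝ) × (Fin N → ℝ)) = c • (v, 0) := fun c v => by simp
    have e2 : ∀ (c : ℝ) (v : Fin N → ℝ), (((0 : Fin N → ℝ), c • v) :
        (Fin N → ℝ) × (Fin N → ℝ)) = c • (0, v) := fun c v => by simp
    simp only [e1, e2, map_smul, smul_eq_mul]
  -- compare the linear terms with the payments
  have hterm1 : ∀ j, (Pbar j - pbar0 j) * D (Pi.single j 1, 0) ≤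
      lbar j * (Pbar j - pbar0 j) := by
    intro j
    rw [hlbar j]
    have h1 : 0 ≤ ∑ i, Aplus i j * mubar i :=
      Finset.sum_nonneg fun i _ => mul_nonneg (hAp i j) (hmb i)
    have h2 : 0 ≤ ∑ i, Aminus i j * muund i :=
      Finset.sum_nonneg fun i _ => mul_nonneg (hAm i j) (hmu i)
    have h3 := hob j
    have h4 := sub_nonneg.mpr (hPbar j)
    nlinarith [mul_nonneg (add_nonneg (add_nonneg h1 h2) h3) h4]
  have hterm2 : ∀ j, (Pund j - pund0 j) * D (0, Pi.single j 1) ≤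
      lund j * (Pund j - pund0 j) := by
    intro j
    rw [hlund j]
    have h1 : 0 ≤ ∑ i, Aminus i j * mubar i :=
      Finset.sum_nonneg fun i _ => mul_nonneg (hAm i j) (hmb i)
    have h2 : 0 ≤ ∑ i, Aplus i j * muund i :=
      Finset.sum_nonneg fun i _ => mul_nonneg (hAp i j) (hmu i)
    have h3 := hou j
    have h4 := sub_nonneg.mpr (hPund j)
    nlinarith [mul_nonneg (add_nonneg (add_nonneg h1 h2) h3) h4]
  calc J (Pbar, Pund) - J (pbar0, pund0)
      ≤ D ((Pbar, Pund) - (pbar0, pund0)) := hfo'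
    _ = (∑ j, (Pbar j - pbar0 j) * D (Pi.single j 1, 0))
        + ∑ j, (Pund j - pund0 j) * D (0, Pi.single j 1) := hDval
    _ ≤ (∑ j, lbar j * (Pbar j - pbar0 j)) + ∑ j, lund j * (Pund j - pund0 j) :=
        add_le_add (Finset.sum_le_sum fun j _ => hterm1 j)
          (Finset.sum_le_sum fun j _ => hterm2 j)
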